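/- arXiv:1211.3852 — 5 statements merged into one kernel-verified Lean document; each statement's English description precedes it below -/
import Mathlib

section
/- A nontrivial group with exactly one non-trivial conjugacy class which contains an element of finite order has exactly two elements. -/
theorem one_conjugacy_class_torsion_card_two {G : Type*} [Group G] [Nontrivial G]
    (hconj : ∀ x y : G, x ≠ 1 → y ≠ 1 → IsConj x y)
    (htor : ∃ x : G, x ≠ 1 ∧ orderOf x ≠ 0) :
    Nat.card G = 2 := by
  obtain ⟨x, hx1, hxord⟩ := htor
  set n := orderOf x with hn
  -- every nonidentity element has order n
  have horder : ∀ y : G, y ≠ 1 → orderOf y = n := by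
    intro y hy
    obtain ⟨c, hc⟩ := hconj y x hy hx1
    exact hc.orderOf_eq _
  have hn1 : n ≠ 1 := by
    intro h
    exact hx1 (orderOf_eq_one_iff.mp h)
  by_cases h2 : n = 2
  · -- exponent 2, abelian, so G = {1, x}
    have hsq : ∀ g : G, g * g = 1 := by
      intro g
      by_cases hg : g = 1
      · simp [hg]
      · have := horder g hg
        rw [h2] at this
        have := pow_orderOf_eq_one g
        rw [horder g hg, h2, pow_two] at this
        exact this
    have hinv : ∀ g : G, g⁻¹ = g := by
      intro g
      rw [inv_eq_iff_mul_eq_one, hsq]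
    have hcomm : ∀ a b : G, a * b = b * a := by
      intro a b
      have : (a * b)⁻¹ = a * b := hinv _
      rw [mul_inv_rev, hinv, hinv] at this
      exact this.symm
    have hall : ∀ g : G, g = 1 ∨ g = x := by
      intro g
      by_cases hg : g = 1
      · exact Or.inl hg
      · right
        obtain ⟨c, hc⟩ := hconj g x hg hx1
        have : c * g = x * c := hc
        rw [hcomm c g] at this
        exact mul_right_cancel this
    rw [Nat.card_eq_two_iff]
    refine ⟨1, x, Ne.symm hx1, ?_⟩
    ext g
    simp only [Set.mem_insert_iff, Set.mem_singleton_iff, Set.mem_univ, iff_true]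
    exact hall g
  · -- n odd case gives contradiction
    exfalso
    have hnpos : 0 < n := Nat.pos_of_ne_zero hxord
    -- n is prime
    have hprime : Nat.Prime n := by
      rw [Nat.prime_def_lt]
      refine ⟨by omega, ?_⟩
      intro m hmlt hmdvd
      by_contra hm1
      have hmpos : m ≠ 0 := by
        rintro rfl
        rw [Nat.zero_dvd] at hmdvd
        omega
      have hxm : x ^ m ≠ 1 := by
        intro h
        have := orderOf_dvd_of_pow_eq_one h
        rw [← hn] at this
        have := Nat.le_of_dvd (Nat.pos_of_ne_zero hmpos) this
        omega
      have := horder (x ^ m) hxm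
      rw [orderOf_pow' x hmpos, ← hn, Nat.gcd_eq_right hmdvd] at this
      rw [Nat.div_eq_self] at this
      omega
    -- x^2 ≠ 1
    have hx2 : x * x ≠ 1 := by
      intro h
      have : x ^ 2 = 1 := by rw [pow_two]; exact h
      have := orderOf_dvd_of_pow_eq_one this
      rw [← hn] at this
      rcases (Nat.dvd_prime Nat.prime_two).mp this with h | h <;> omega
    -- x is conjugate to x^2
    obtain ⟨c, hcx⟩ := isConj_iff.mp (hconj x (x ^ 2) hx1 (by rwa [pow_two]))
    have hc1 : c ≠ 1 := by
      rintro rfl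
      simp only [one_mul, inv_one, mul_one] at hcx
      rw [pow_two] at hcx
      exact hx1 (by nth_rewrite 1 [← mul_one x] at hcx; exact (mul_left_cancel hcx).symm)
    have hcord : orderOf c = n := horder c hc1
    -- iteration: c^k * x * (c^k)⁻¹ = x ^ (2^k)
    have hiter : ∀ k : ℕ, c ^ k * x * (c ^ k)⁻¹ = x ^ (2 ^ k) := by
      intro k
      induction k with
      | zero => simp
      | succ k ih =>
        have : c ^ (k + 1) * x * (c ^ (k + 1))⁻¹
            = c * (c ^ k * x * (c ^ k)⁻¹) * c⁻¹ := by
          rw [pow_succ']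
          group
        rw [this, ih, ← conj_pow, hcx, ← pow_mul, ← pow_succ']
    have hkey := hiter n
    rw [← hcord, pow_orderOf_eq_one, one_mul, inv_one, mul_one, hcord] at hkey
    -- so x ^ (2^n) = x, hence n ∣ 2^n - 1
    have hdvd1 : n ∣ 2 ^ n - 1 := by
      apply orderOf_dvd_of_pow_eq_one
      have h2n : 1 ≤ 2 ^ n := Nat.one_le_two_pow
      have : x ^ (2 ^ n) = x ^ (2 ^ n - 1) * x := by
        rw [← pow_succ]
        congr 1
        omega
      rw [this] at hkey
      nth_rewrite 1 [← one_mul x] at hkey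
      exact mul_right_cancel hkey.symm
    -- Fermat: n ∣ 2^n - 2
    have hdvd2 : n ∣ 2 ^ n - 2 := by
      haveI : Fact (Nat.Prime n) := ⟨hprime⟩
      have := ZMod.pow_card (2 : ZMod n)
      have h2n : 2 ≤ 2 ^ n := by
        calc 2 = 2 ^ 1 := (pow_one 2).symm
        _ ≤ 2 ^ n := Nat.pow_le_pow_right (by norm_num) (by omega)
      have : ((2 ^ n - 2 : ℕ) : ZMod n) = 0 := by
        push_cast [Nat.cast_sub h2n]
        rw [this]
        ring
      exact (ZMod.natCast_eq_zero_iff _ _).mp this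
    -- contradiction: n ∣ 1
    have h2n : 2 ≤ 2 ^ n := by
      calc 2 = 2 ^ 1 := (pow_one 2).symm
      _ ≤ 2 ^ n := Nat.pow_le_pow_right (by norm_num) (by omega)
    have : n ∣ (2 ^ n - 1) - (2 ^ n - 2) := Nat.dvd_sub hdvd1 hdvd2
    have heq : (2 ^ n - 1) - (2 ^ n - 2) = 1 := by omega
    rw [heq, Nat.dvd_one] at this
    omega
end

section
/- A group with exactly one non-trivial conjugacy class that has more than two elements is torsion-free. -/
private lemma semiconj_pow_aux {G : Type*} [Group G] {c y : G}
    (h : SemiconjBy c y (y ^ 2)) : ∀ k : ℕ, SemiconjBy (c ^ k) y (y ^ 2 ^ k) := by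
  intro k
  induction k with
  | zero => simp only [pow_zero, pow_one]; exact SemiconjBy.one_left y
  | succ k ih =>
    have h2 : SemiconjBy c (y ^ 2 ^ k) ((y ^ 2) ^ 2 ^ k) := SemiconjBy.pow_right h _
    have hk : SemiconjBy (c * c ^ k) y (y ^ (2 * 2 ^ k)) := by
      have := SemiconjBy.mul_left h2 ih
      rwa [← pow_mul] at this
    rw [pow_succ' c k, pow_succ' 2 k]
    exact hk

theorem one_conjugacy_class_torsionFree {G : Type*} [Group G]
    (hcard : 2 < Cardinal.mk G)
    (hconj : ∀ x y : G, x ≠ 1 → y ≠ 1 → IsConj x y) :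
    ∀ x : G, x ≠ 1 → orderOf x = 0 := by
  intro x hx
  by_contra hn
  set n := orderOf x with hno
  have hne1 : n ≠ 1 := fun h => hx (orderOf_eq_one_iff.mp (hno.symm.trans h))
  have hn1 : 1 < n := by omega
  set p := n.minFac with hp
  have hpp : p.Prime := Nat.minFac_prime hne1
  have hpd : p ∣ n := Nat.minFac_dvd n
  have hnp : n / p ≠ 0 := by
    have hle : p ≤ n := Nat.le_of_dvd (by omega) hpd
    have := Nat.div_pos hle hpp.pos
    omega
  -- element of order p
  set y := x ^ (n / p) with hy
  have hyo : orderOf y = p := by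
    rw [hy, orderOf_pow' x hnp, ← hno, Nat.gcd_eq_right (Nat.div_dvd_of_dvd hpd),
      Nat.div_div_self hpd (by omega)]
  have hy1 : y ≠ 1 := by
    intro h
    rw [h, orderOf_one] at hyo
    exact hpp.one_lt.ne hyo
  -- every nontrivial element has order p
  have horder : ∀ z : G, z ≠ 1 → orderOf z = p := by
    intro z hz
    obtain ⟨c, hc⟩ := isConj_iff.mp (hconj y z hy1 hz)
    have hsem : SemiconjBy c y z := by
      rw [SemiconjBy, ← hc]; group
    rw [← SemiconjBy.orderOf_eq c hsem, hyo]
  rcases hpp.eq_two_or_odd' with h2 | hodd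
  · -- p = 2 : group is abelian, so all nontrivial elements are equal
    have hsq : ∀ z : G, z * z = 1 := by
      intro z
      by_cases hz : z = 1
      · simp [hz]
      · have := pow_orderOf_eq_one z
        rwa [horder z hz, h2, pow_two] at this
    have hcomm : ∀ a b : G, a * b = b * a := by
      intro a b
      have h1 := hsq (a * b)
      have hab : a * b = (a * b)⁻¹ := by
        rw [eq_inv_iff_mul_eq_one]; exact h1
      rw [hab, mul_inv_rev, inv_eq_of_mul_eq_one_right (hsq b),
        inv_eq_of_mul_eq_one_right (hsq a)]
    have h3 : (3 : Cardinal) ≤ Cardinal.mk G := by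
      have h2' : ((2 : ℕ) : Cardinal) < Cardinal.mk G := by exact_mod_cast hcard
      have := Order.succ_le_of_lt h2'
      rwa [← Cardinal.nat_succ, show ((3 : ℕ) : Cardinal) = 3 by norm_num] at this
    obtain ⟨z, hz1, hzx⟩ := Cardinal.three_le h3 1 x
    obtain ⟨c, hc⟩ := isConj_iff.mp (hconj x z hx hz1)
    rw [hcomm c x, mul_assoc, mul_inv_cancel, mul_one] at hc
    exact hzx hc.symm
  · -- p odd : y is conjugate to y ^ 2
    have hy2 : y ^ 2 ≠ 1 := by
      intro h
      have hd := orderOf_dvd_of_pow_eq_one h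
      rw [hyo] at hd
      have := Nat.le_of_dvd (by norm_num) hd
      have := hpp.two_le
      interval_cases p
      · exact (Nat.not_odd_iff_even.mpr (by norm_num)) hodd
    obtain ⟨c, hc⟩ := isConj_iff.mp (hconj y (y ^ 2) hy1 hy2)
    have hsem : SemiconjBy c y (y ^ 2) := by
      rw [SemiconjBy, ← hc]; group
    have hc1 : c ≠ 1 := by
      intro h
      rw [h] at hsem
      have h1 : y * y = y := by
        have := hsem.eq
        simp only [one_mul, mul_one, pow_two] at this
        exact this.symm
      exact hy1 (mul_eq_right.mp h1)
    have hco : orderOf c = p := horder c hc1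
    have hcp : c ^ p = 1 := by rw [← hco]; exact pow_orderOf_eq_one c
    have hsc := semiconj_pow_aux hsem p
    rw [hcp] at hsc
    have hyp : y ^ 2 ^ p = y := by
      have := hsc.eq
      simpa using this.symm
    have hdvd : p ∣ 2 ^ p - 1 := by
      have h2p : 1 ≤ 2 ^ p := Nat.one_le_two_pow
      have hmul : y ^ (2 ^ p - 1) * y = y := by
        rw [← pow_succ, Nat.sub_add_cancel h2p, hyp]
      have hone : y ^ (2 ^ p - 1) = 1 := mul_eq_right.mp hmul
      have := orderOf_dvd_of_pow_eq_one hone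
      rwa [hyo] at this
    -- Fermat's little theorem contradiction
    haveI : Fact p.Prime := ⟨hpp⟩
    have hz : ((2 ^ p - 1 : ℕ) : ZMod p) = 0 :=
      (ZMod.natCast_eq_zero_iff _ _).mpr hdvd
    rw [Nat.cast_sub Nat.one_le_two_pow, Nat.cast_pow, Nat.cast_ofNat,
      ZMod.pow_card, Nat.cast_one] at hz
    have h1 : (1 : ZMod p) = 0 := by
      have h21 : (2 : ZMod p) - 1 = 1 := by ring
      rw [h21] at hz; exact hz
    have hcast : ((1 : ℕ) : ZMod p) = 0 := by simpa using h1
    have hd1 := (ZMod.natCast_eq_zero_iff 1 p).mp hcast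
    have := Nat.le_of_dvd one_pos hd1
    have := hpp.one_lt
    omega
end

section
/- In the free product G * ℤ, the centralizer of any non-identity element y of the factor G is equal to the centralizer of y computed in G; i.e., every element of G * ℤ commuting with y lies in G. -/
open Monoid CoprodI List in
private theorem coprodI_centralizer_aux {ι : Type*} [DecidableEq ι] {M : ι → Type*}
    [∀ i, Group (M i)] {i : ι} (y : M i) (hy : y ≠ 1) (k : CoprodI M)
    (h : of y * k = k * of y) : ∃ g : M i, k = of g := by
  classical
  set P : List (Σ i, M i) → CoprodI M := fun L => (L.map fun l => of l.snd).prod with hP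
  have hinj : ∀ (L₁ L₂ : List (Σ i, M i)),
      (∀ l ∈ L₁, l.2 ≠ 1) → L₁.Chain' (fun a b => a.1 ≠ b.1) →
      (∀ l ∈ L₂, l.2 ≠ 1) → L₂.Chain' (fun a b => a.1 ≠ b.1) →
      P L₁ = P L₂ → L₁ = L₂ := by
    intro L₁ L₂ h1 h2 h3 h4 h5
    have : (⟨L₁, h1, h2⟩ : Word M) = ⟨L₂, h3, h4⟩ :=
      Word.equiv.symm.injective (a₁ := ⟨L₁, h1, h2⟩) (a₂ := ⟨L₂, h3, h4⟩) h5
    exact congrArg Word.toList this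
  obtain ⟨L, hne, hch, rfl⟩ : ∃ L, (∀ l ∈ L, l.2 ≠ 1) ∧
      L.Chain' (fun a b => a.1 ≠ b.1) ∧ P L = k := by
    refine ⟨(Word.equiv k).toList, (Word.equiv k).ne_one, (Word.equiv k).chain_ne, ?_⟩
    exact Word.equiv.symm_apply_apply k
  match L, hne, hch with
  | [], _, _ => exact ⟨1, by simp [hP]⟩
  | [⟨j, g⟩], hne, hch =>
    rcases eq_or_ne j i with rfl | hji
    · exact ⟨g, by simp [hP]⟩
    · exfalso
      have hg1 : g ≠ 1 := hne ⟨j, g⟩ (List.mem_singleton_self _)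
      have m1 : ∀ l ∈ [(⟨i, y⟩ : Σ i, M i), ⟨j, g⟩], l.snd ≠ 1 := by
        intro l hl
        rcases List.mem_pair.mp hl with rfl | rfl
        exacts [hy, hg1]
      have m2 : ∀ l ∈ [(⟨j, g⟩ : Σ i, M i), ⟨i, y⟩], l.snd ≠ 1 := by
        intro l hl
        rcases List.mem_pair.mp hl with rfl | rfl
        exacts [hg1, hy]
      have c1 : List.Chain' (fun a b => a.1 ≠ b.1) [(⟨i, y⟩ : Σ i, M i), ⟨j, g⟩] := by
        simp [List.Chain', hji.symm]
      have c2 : List.Chain' (fun a b => a.1 ≠ b.1) [(⟨j, g⟩ : Σ i, M i), ⟨i, y⟩] := by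
        simp [List.Chain', hji]
      have pe : P [(⟨i, y⟩ : Σ i, M i), ⟨j, g⟩] = P [(⟨j, g⟩ : Σ i, M i), ⟨i, y⟩] := by
        simp only [hP, List.map_cons, List.map_nil, List.prod_cons, List.prod_nil,
          mul_one] at h ⊢
        exact h
      have := hinj _ _ m1 c1 m2 c2 pe
      injection this with h1 h2
      exact hji (congrArg Sigma.fst h1).symm
  | a :: b :: t, hne, hch =>
    exfalso
    obtain ⟨mid, z, hmz⟩ := (List.eq_nil_or_concat (b :: t)).resolve_left (by simp)
    rw [List.concat_eq_append] at hmz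
    rw [show a :: b :: t = a :: (b :: t) from rfl, hmz] at hne hch h
    obtain ⟨j₀, g₀⟩ := a
    obtain ⟨j₁, g₁⟩ := z
    have Pcons : ∀ (x : Σ i, M i) s, P (x :: s) = of x.2 * P s := by simp [hP]
    have Papp : ∀ s r, P (s ++ r) = P s * P r := by simp [hP]
    have Psing : ∀ (x : Σ i, M i), P [x] = of x.2 := by simp [hP]
    have cancel_left : ∀ (s : List (Σ i, M i)) (g : M i), y * g = 1 →
        P s = of y * P (⟨i, g⟩ :: s) := by
      intro s g hyg
      rw [Pcons, ← mul_assoc, ← map_mul, hyg, map_one, one_mul]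
    have repl_left : ∀ (s : List (Σ i, M i)) (g : M i),
        P (⟨i, y * g⟩ :: s) = of y * P (⟨i, g⟩ :: s) := by
      intro s g; rw [Pcons, Pcons, map_mul, mul_assoc]
    have cancel_right : ∀ (s : List (Σ i, M i)) (g : M i), g * y = 1 →
        P s = P (s ++ [⟨i, g⟩]) * of y := by
      intro s g hgy
      rw [Papp, Psing, mul_assoc, ← map_mul, hgy, map_one, mul_one]
    have repl_right : ∀ (s : List (Σ i, M i)) (g : M i),
        P (s ++ [⟨i, g * y⟩]) = P (s ++ [⟨i, g⟩]) * of y := by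
      intro s g; rw [Papp, Papp, Psing, Psing, map_mul, ← mul_assoc]
    have app_right : ∀ s : List (Σ i, M i), P (s ++ [⟨i, y⟩]) = P s * of y := fun s => by
      rw [Papp, Psing]
    have hg₀ : g₀ ≠ 1 := hne ⟨j₀, g₀⟩ (by simp)
    have hg₁ : g₁ ≠ 1 := hne ⟨j₁, g₁⟩ (by simp)
    have hmid : ∀ l ∈ mid, l.2 ≠ 1 := fun l hl => hne l (by simp [hl])
    have hheadne : ∀ u ∈ (mid ++ [⟨j₁, g₁⟩] :
        List (Σ i, M i)).head?, j₀ ≠ u.1 := (List.isChain_cons.mp hch).1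
    have hchT : List.Chain' (fun a b => a.1 ≠ b.1) (mid ++ [⟨j₁, g₁⟩]) :=
      (List.isChain_cons.mp hch).2
    have hchApp := List.isChain_append.mp
      (show List.Chain' (fun a b : (Σ i, M i) => a.1 ≠ b.1)
        ((⟨j₀, g₀⟩ :: mid) ++ [⟨j₁, g₁⟩]) from hch)
    have hchA : List.Chain' (fun a b : (Σ i, M i) => a.1 ≠ b.1) (⟨j₀, g₀⟩ :: mid) := hchApp.1
    have hlast : ∀ u ∈ (⟨j₀, g₀⟩ :: mid : List (Σ i, M i)).getLast?, u.1 ≠ j₁ :=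
      fun u hu => hchApp.2.2 u hu ⟨j₁, g₁⟩ rfl
    -- memberships for candidate right words
    have memsR2 : ∀ g : M i, g * y ≠ 1 →
        ∀ l ∈ ((⟨j₀, g₀⟩ :: mid) ++ [⟨i, g * y⟩] : List (Σ i, M i)), l.2 ≠ 1 := by
      intro g hgy l hl
      rcases List.mem_append.mp hl with hl | hl
      · rcases List.mem_cons.mp hl with rfl | hl
        exacts [hg₀, hmid l hl]
      · rw [List.mem_singleton.mp hl]; exact hgy
    have memsR3 : ∀ l ∈ (⟨j₀, g₀⟩ :: mid : List (Σ i, M i)), l.2 ≠ 1 := fun l hl => by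
      rcases List.mem_cons.mp hl with rfl | hl
      exacts [hg₀, hmid l hl]
    have memsR1 : ∀ l ∈ ((⟨j₀, g₀⟩ :: (mid ++ [⟨j₁, g₁⟩])) ++ [⟨i, y⟩] : List (Σ i, M i)),
        l.2 ≠ 1 := fun l hl => by
      rcases List.mem_append.mp hl with hl | hl
      · exact hne l hl
      · rw [List.mem_singleton.mp hl]; exact hy
    -- chains for candidate right words
    have chR2 : ∀ g : M i, j₁ = i → List.Chain' (fun a b : (Σ i, M i) => a.1 ≠ b.1)
        ((⟨j₀, g₀⟩ :: mid) ++ [⟨i, g⟩]) := by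
      intro g hzi
      refine List.isChain_append.mpr ⟨hchA, List.isChain_singleton _, fun u hu v hv => ?_⟩
      rw [Option.mem_def, List.head?_cons, Option.some_inj] at hv
      rw [← hv]
      exact hzi ▸ hlast u hu
    have chR1 : j₁ ≠ i → List.Chain' (fun a b : (Σ i, M i) => a.1 ≠ b.1)
        ((⟨j₀, g₀⟩ :: (mid ++ [⟨j₁, g₁⟩])) ++ [⟨i, y⟩]) := by
      intro hzi
      refine List.isChain_append.mpr ⟨hch, List.isChain_singleton _, fun u hu v hv => ?_⟩
      rw [Option.mem_def, List.head?_cons, Option.some_inj] at hv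
      have hu' : (((⟨j₀, g₀⟩ :: mid) ++ [⟨j₁, g₁⟩] : List (Σ i, M i))).getLast? = some u := hu
      rw [List.getLast?_concat, Option.some_inj] at hu'
      rw [← hv, ← hu']; exact hzi
    by_cases hai : j₀ = i
    · subst j₀
      by_cases hyg : y * g₀ = 1
      · -- left word : mid ++ [⟨j₁,g₁⟩]  (length = |mid| + 1)
        have left_eq := cancel_left (mid ++ [⟨j₁, g₁⟩]) g₀ hyg
        have memsL : ∀ l ∈ (mid ++ [⟨j₁, g₁⟩] : List (Σ i, M i)), l.2 ≠ 1 := fun l hl =>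
          hne l (List.mem_cons_of_mem _ hl)
        by_cases hzi : j₁ = i
        · subst j₁
          by_cases hgy : g₁ * y = 1
          · -- right word : ⟨i,g₀⟩ :: mid ; same length, compare heads via chain
            have right_eq := cancel_right (⟨i, g₀⟩ :: mid) g₁ hgy
            have heq := hinj _ _ memsL hchT memsR3 hchA
              (by rw [left_eq, right_eq]; exact h)
            have hh := congrArg List.head? heq
            simp only [List.head?_cons] at hh
            exact hheadne ⟨i, g₀⟩ (by rw [hh]; rfl) rfl
          · -- right word : (⟨i,g₀⟩::mid) ++ [⟨i, g₁*y⟩] ; length |mid|+2 vs |mid|+1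
            have right_eq := repl_right (⟨i, g₀⟩ :: mid) g₁
            have heq := hinj _ _ memsL hchT (memsR2 g₁ hgy) (chR2 _ rfl)
              (by rw [left_eq, right_eq]; exact h)
            have := congrArg List.length heq
            simp only [List.length_append, List.length_cons, List.length_nil] at this
            omega
        · -- right word : L ++ [⟨i,y⟩] ; length |mid|+3 vs |mid|+1
          have right_eq := app_right (⟨i, g₀⟩ :: (mid ++ [⟨j₁, g₁⟩]))
          have heq := hinj _ _ memsL hchT memsR1 (chR1 hzi)
            (by rw [left_eq, right_eq]; exact h)
          have := congrArg List.length heq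
          simp only [List.length_append, List.length_cons, List.length_nil] at this
          omega
      · -- left word : ⟨i, y*g₀⟩ :: (mid ++ [⟨j₁,g₁⟩]) (length |mid|+2)
        have left_eq := repl_left (mid ++ [⟨j₁, g₁⟩]) g₀
        have memsL : ∀ l ∈ (⟨i, y * g₀⟩ :: (mid ++ [⟨j₁, g₁⟩]) : List (Σ i, M i)), l.2 ≠ 1 :=
          fun l hl => by
            rcases List.mem_cons.mp hl with rfl | hl
            exacts [hyg, hne l (List.mem_cons_of_mem _ hl)]
        have chL : List.Chain' (fun a b : (Σ i, M i) => a.1 ≠ b.1)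
            (⟨i, y * g₀⟩ :: (mid ++ [⟨j₁, g₁⟩])) := List.isChain_cons.mpr ⟨hheadne, hchT⟩
        by_cases hzi : j₁ = i
        · subst j₁
          by_cases hgy : g₁ * y = 1
          · -- right : ⟨i,g₀⟩ :: mid ; length |mid|+1 vs |mid|+2
            have right_eq := cancel_right (⟨i, g₀⟩ :: mid) g₁ hgy
            have heq := hinj _ _ memsL chL memsR3 hchA
              (by rw [left_eq, right_eq]; exact h)
            have := congrArg List.length heq
            simp only [List.length_append, List.length_cons, List.length_nil] at this
            omega
          · -- right : (⟨i,g₀⟩::mid) ++ [⟨i,g₁*y⟩] ; same length, compare heads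
            have right_eq := repl_right (⟨i, g₀⟩ :: mid) g₁
            have heq := hinj _ _ memsL chL (memsR2 g₁ hgy) (chR2 _ rfl)
              (by rw [left_eq, right_eq]; exact h)
            have heq' : (⟨i, y * g₀⟩ : Σ i, M i) :: (mid ++ [⟨i, g₁⟩])
                = ⟨i, g₀⟩ :: (mid ++ [⟨i, g₁ * y⟩]) := heq
            injection heq' with h1 h2
            obtain ⟨-, h3⟩ := Sigma.mk.inj_iff.mp h1
            exact hy (mul_eq_right.mp (eq_of_heq h3))
        · -- right : L ++ [⟨i,y⟩] ; length |mid|+3 vs |mid|+2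
          have right_eq := app_right (⟨i, g₀⟩ :: (mid ++ [⟨j₁, g₁⟩]))
          have heq := hinj _ _ memsL chL memsR1 (chR1 hzi)
            (by rw [left_eq, right_eq]; exact h)
          have := congrArg List.length heq
          simp only [List.length_append, List.length_cons, List.length_nil] at this
          omega
    · -- j₀ ≠ i : left word ⟨i,y⟩ :: L (length |mid|+3)
      have left_eq := Pcons ⟨i, y⟩ (⟨j₀, g₀⟩ :: (mid ++ [⟨j₁, g₁⟩]))
      have memsL : ∀ l ∈ (⟨i, y⟩ :: ⟨j₀, g₀⟩ :: (mid ++ [⟨j₁, g₁⟩]) : List (Σ i, M i)),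
          l.2 ≠ 1 := fun l hl => by
        rcases List.mem_cons.mp hl with rfl | hl
        exacts [hy, hne l hl]
      have chL : List.Chain' (fun a b : (Σ i, M i) => a.1 ≠ b.1)
          (⟨i, y⟩ :: ⟨j₀, g₀⟩ :: (mid ++ [⟨j₁, g₁⟩])) :=
        List.isChain_cons.mpr ⟨fun u hu => by
          rw [List.head?_cons, Option.mem_def, Option.some_inj] at hu
          rw [← hu]; exact Ne.symm hai, hch⟩
      by_cases hzi : j₁ = i
      · subst j₁
        by_cases hgy : g₁ * y = 1
        · -- right : ⟨j₀,g₀⟩ :: mid ; |mid|+1 vs |mid|+3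
          have right_eq := cancel_right (⟨j₀, g₀⟩ :: mid) g₁ hgy
          have heq := hinj _ _ memsL chL memsR3 hchA
            (by rw [left_eq, right_eq]; exact h)
          have := congrArg List.length heq
          simp only [List.length_append, List.length_cons, List.length_nil] at this
          omega
        · -- right : (⟨j₀,g₀⟩::mid) ++ [⟨i,g₁*y⟩] ; |mid|+2 vs |mid|+3
          have right_eq := repl_right (⟨j₀, g₀⟩ :: mid) g₁
          have heq := hinj _ _ memsL chL (memsR2 g₁ hgy) (chR2 _ rfl)
            (by rw [left_eq, right_eq]; exact h)
          have := congrArg List.length heq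
          simp only [List.length_append, List.length_cons, List.length_nil] at this
          omega
      · -- right : L ++ [⟨i,y⟩] ; same length, compare heads
        have right_eq := app_right (⟨j₀, g₀⟩ :: (mid ++ [⟨j₁, g₁⟩]))
        have heq := hinj _ _ memsL chL memsR1 (chR1 hzi)
          (by rw [left_eq, right_eq]; exact h)
        have heq' : (⟨i, y⟩ : Σ i, M i) :: ⟨j₀, g₀⟩ :: (mid ++ [⟨j₁, g₁⟩])
            = ⟨j₀, g₀⟩ :: ((mid ++ [⟨j₁, g₁⟩]) ++ [⟨i, y⟩]) := heq
        injection heq' with h1 h2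
        exact hai (congrArg Sigma.fst h1).symm

private abbrev FP (G : Type u) : Bool → Type u :=
  fun b => cond b G (ULift (Multiplicative ℤ))

private instance {G : Type u} [Group G] : ∀ b, Group (FP G b)
  | true => inferInstanceAs (Group G)
  | false => inferInstanceAs (Group (ULift (Multiplicative ℤ)))

theorem centralizer_in_factor {G : Type*} [Group G] (y : G) (hy : y ≠ 1) :
    ∀ k : Monoid.Coprod G (Multiplicative ℤ),
      k * Monoid.Coprod.inl y = Monoid.Coprod.inl y * k →
      ∃ g : G, g * y = y * g ∧ k = Monoid.Coprod.inl g := by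
  intro k hk
  set φ : Monoid.Coprod G (Multiplicative ℤ) →* Monoid.CoprodI (FP G) :=
    Monoid.Coprod.lift (Monoid.CoprodI.of (M := FP G) (i := true))
      ((Monoid.CoprodI.of (M := FP G) (i := false)).comp (MulEquiv.ulift.symm.toMonoidHom)) with hφ
  set ψ : Monoid.CoprodI (FP G) →* Monoid.Coprod G (Multiplicative ℤ) :=
    Monoid.CoprodI.lift (fun b => match b with
      | true => Monoid.Coprod.inl
      | false => Monoid.Coprod.inr.comp MulEquiv.ulift.toMonoidHom) with hψ
  have key : ψ.comp φ = MonoidHom.id _ := by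
    apply Monoid.Coprod.hom_ext <;> ext x <;>
      simp only [hφ, hψ, MonoidHom.comp_apply, MonoidHom.id_apply,
        Monoid.Coprod.lift_apply_inl, Monoid.Coprod.lift_apply_inr,
        Monoid.CoprodI.lift_of] <;> rfl
  have hψφ : ∀ x, ψ (φ x) = x := fun x => congrFun (congrArg (fun f => f.toFun) key) x
  have hφinl : φ (Monoid.Coprod.inl y) = Monoid.CoprodI.of (i := true) y :=
    Monoid.Coprod.lift_apply_inl _ _ y
  have hk' : Monoid.CoprodI.of (i := true) y * φ k = φ k * Monoid.CoprodI.of (i := true) y := by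
    have := congrArg φ hk
    rw [map_mul, map_mul, hφinl] at this
    exact this.symm
  obtain ⟨g, hg⟩ := coprodI_centralizer_aux (M := FP G) (i := true) y hy (φ k) hk'
  have hkg : k = Monoid.Coprod.inl g := by
    have := hψφ k
    rw [hg] at this
    rw [← this, hψ, Monoid.CoprodI.lift_of]
  refine ⟨g, ?_, hkg⟩
  apply Monoid.Coprod.inl_injective (M := G) (N := Multiplicative ℤ)
  rw [map_mul, map_mul]
  rw [hkg] at hk
  exact hk
end

section
/- In a free group, if aⁿ = bⁿ for a natural number n ≥ 1, then a = b. -/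
namespace FreeGroupRootAux

open List FreeGroup

variable {α : Type*}

/-- The formal inverse of a letter. -/
def inv1 (p : α × Bool) : α × Bool := (p.1, !p.2)

@[simp] lemma inv1_inv1 (p : α × Bool) : inv1 (inv1 p) = p := by
  simp [inv1]

lemma ne_inv1_self (p : α × Bool) : p ≠ inv1 p := by
  intro h
  have := congrArg Prod.snd h
  simp [inv1] at this

/-- A word is reduced iff no adjacent pair of letters is of the form `x, x⁻¹`. -/
def IsRed (L : List (α × Bool)) : Prop := L.Chain' fun p q => q ≠ inv1 p

lemma IsRed.nil : IsRed ([] : List (α × Bool)) := List.isChain_nil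

lemma IsRed.no_step {L L' : List (α × Bool)} (h : IsRed L) : ¬ FreeGroup.Red.Step L L' := by
  intro s
  cases s with
  | @not L₁ L₂ x b =>
    have hinf : [(x, b), (x, !b)] <:+: (L₁ ++ (x, b) :: (x, !b) :: L₂) :=
      ⟨L₁, L₂, by simp⟩
    have h2 := h.infix hinf
    rw [List.isChain_cons_cons] at h2
    exact h2.1 rfl

lemma reduce_eq_self [DecidableEq α] {L : List (α × Bool)} (h : IsRed L) :
    FreeGroup.reduce L = L := by
  have hr : FreeGroup.Red L (FreeGroup.reduce L) := FreeGroup.reduce.red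
  rcases Relation.ReflTransGen.cases_head hr with heq | ⟨c, hs, _⟩
  · exact heq.symm
  · exact absurd hs h.no_step

lemma isRed_of_noCancel :
    ∀ (M : List (α × Bool)),
      (∀ (L₁ : List (α × Bool)) (x : α) (b : Bool) (L₂ : List (α × Bool)),
        M ≠ L₁ ++ (x, b) :: (x, !b) :: L₂) → IsRed M
  | [], _ => List.isChain_nil
  | [p], _ => List.isChain_singleton p
  | p :: q :: t, h => by
    rw [IsRed, List.Chain', List.isChain_cons_cons]
    constructor
    · intro hq
      exact h [] p.1 p.2 t (by rw [hq]; simp [inv1])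
    · exact isRed_of_noCancel (q :: t) fun L₁ x b L₂ he => h (p :: L₁) x b L₂ (by rw [he]; simp)

lemma isRed_toWord [DecidableEq α] (x : FreeGroup α) : IsRed x.toWord := by
  rw [← FreeGroup.reduce_toWord]
  exact isRed_of_noCancel _ fun L₁ x b L₂ he => FreeGroup.reduce.not he

lemma toWord_mk_eq [DecidableEq α] {L : List (α × Bool)} (h : IsRed L) :
    (FreeGroup.mk L).toWord = L := by
  rw [FreeGroup.toWord_mk, reduce_eq_self h]

lemma invRev_eq (L : List (α × Bool)) : FreeGroup.invRev L = (L.map inv1).reverse := rfl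

lemma IsRed.invRev {L : List (α × Bool)} (h : IsRed L) : IsRed (FreeGroup.invRev L) := by
  rw [invRev_eq, IsRed, List.Chain', List.isChain_reverse, List.isChain_map]
  refine h.imp ?_
  intro a b hab hne
  apply hab
  rw [inv1_inv1] at hne
  exact hne.symm

lemma invRev_ne_nil {L : List (α × Bool)} (h : L ≠ []) : FreeGroup.invRev L ≠ [] := by
  simp [invRev_eq, h]

lemma head?_invRev (L : List (α × Bool)) :
    (FreeGroup.invRev L).head? = L.getLast?.map inv1 := by
  rw [invRev_eq, List.head?_reverse, List.getLast?_map]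

lemma getLast?_invRev (L : List (α × Bool)) :
    (FreeGroup.invRev L).getLast? = L.head?.map inv1 := by
  rw [invRev_eq, List.getLast?_reverse, List.head?_map]

lemma invRev_append (L M : List (α × Bool)) :
    FreeGroup.invRev (L ++ M) = FreeGroup.invRev M ++ FreeGroup.invRev L := by
  simp [invRev_eq]

lemma invRev_cons (p : α × Bool) (L : List (α × Bool)) :
    FreeGroup.invRev (p :: L) = FreeGroup.invRev L ++ [inv1 p] := by
  simp [invRev_eq, inv1]

/-- `pw n C` is the concatenation of `n` copies of `C`. -/
def pw : ℕ → List (α × Bool) → List (α × Bool)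
  | 0, _ => []
  | n + 1, C => C ++ pw n C

lemma mk_pw (n : ℕ) (C : List (α × Bool)) : FreeGroup.mk (pw n C) = (FreeGroup.mk C) ^ n := by
  induction n with
  | zero => rw [pw, pow_zero, FreeGroup.one_eq_mk]
  | succ n ih => rw [pw, ← FreeGroup.mul_mk, ih, pow_succ']

lemma pw_length (n : ℕ) (C : List (α × Bool)) : (pw n C).length = n * C.length := by
  induction n with
  | zero => simp [pw]
  | succ n ih => simp [pw, ih, Nat.succ_mul, Nat.add_comm]

lemma pw_ne_nil {n : ℕ} (hn : n ≠ 0) {C : List (α × Bool)} (hC : C ≠ []) : pw n C ≠ [] := by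
  intro h
  have := congrArg List.length h
  rw [pw_length] at this
  simp only [List.length_nil] at this
  rcases Nat.mul_eq_zero.mp this with h' | h'
  · exact hn h'
  · exact hC (List.length_eq_zero_iff.mp h')

lemma head?_pw {n : ℕ} (hn : n ≠ 0) (C : List (α × Bool)) (hC : C ≠ []) :
    (pw n C).head? = C.head? := by
  cases n with
  | zero => exact absurd rfl hn
  | succ n => rw [pw, List.head?_append_of_ne_nil _ hC]

lemma getLast?_pw {n : ℕ} (hn : n ≠ 0) (C : List (α × Bool)) (hC : C ≠ []) :
    (pw n C).getLast? = C.getLast? := by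
  induction n with
  | zero => exact absurd rfl hn
  | succ n ih =>
    cases n with
    | zero => simp [pw]
    | succ m =>
      rw [pw, List.getLast?_append_of_ne_nil _ (pw_ne_nil (Nat.succ_ne_zero m) hC),
        ih (Nat.succ_ne_zero m)]

/-- Junction condition extracted from `IsRed (C ++ C)`. -/
lemma junction_of_cyc {C : List (α × Bool)} (hCC : IsRed (C ++ C)) :
    ∀ x ∈ C.getLast?, ∀ y ∈ C.head?, y ≠ inv1 x :=
  (List.isChain_append.mp hCC).2.2

lemma isRed_of_cyc {C : List (α × Bool)} (hCC : IsRed (C ++ C)) : IsRed C :=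
  (List.isChain_append.mp hCC).1

lemma isRed_pw {C : List (α × Bool)} (hCC : IsRed (C ++ C)) (hC : C ≠ []) (n : ℕ) :
    IsRed (pw n C) := by
  induction n with
  | zero => exact List.isChain_nil
  | succ n ih =>
    rw [pw, IsRed, List.Chain', List.isChain_append]
    refine ⟨isRed_of_cyc hCC, ih, ?_⟩
    intro x hx y hy
    cases n with
    | zero => simp [pw] at hy
    | succ m =>
      rw [head?_pw (Nat.succ_ne_zero m) C hC] at hy
      exact junction_of_cyc hCC x hx y hy

/-- Every reduced word decomposes as `U ++ C ++ U⁻¹` with `C` cyclically reduced. -/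
lemma decomp [DecidableEq α] :
    ∀ (N : ℕ) (L : List (α × Bool)), L.length ≤ N → IsRed L →
      ∃ U C, L = U ++ C ++ FreeGroup.invRev U ∧ IsRed (C ++ C) ∧ (L ≠ [] → C ≠ []) := by
  intro N
  induction N with
  | zero =>
    intro L hlen _
    have : L = [] := List.length_eq_zero_iff.mp (Nat.le_zero.mp hlen)
    subst this
    exact ⟨[], [], by simp [invRev_eq], List.isChain_nil, fun h => absurd rfl h⟩
  | succ N ih =>
    intro L hlen h
    rcases L with _ | ⟨p, t⟩
    · exact ⟨[], [], by simp [invRev_eq], List.isChain_nil, fun h => absurd rfl h⟩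
    rcases t.eq_nil_or_concat with rfl | ⟨M, q, rfl⟩
    · -- singleton
      refine ⟨[], [p], by simp [invRev_eq], ?_, fun _ => by simp⟩
      have : ([p] ++ [p] : List (α × Bool)) = [p, p] := rfl
      rw [this, IsRed, List.Chain', List.isChain_cons_cons]
      exact ⟨ne_inv1_self p, List.isChain_singleton p⟩
    · -- L = p :: M ++ [q]
      rw [List.concat_eq_append] at *
      by_cases hpq : p = inv1 q
      · -- not cyclically reduced : peel off
        have hM : IsRed M := h.infix ⟨[p], [q], by simp⟩
        have hMne : M ≠ [] := by
          rintro rfl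
          simp only [List.nil_append] at h
          rw [IsRed, List.Chain', List.isChain_cons_cons] at h
          exact h.1 (by rw [hpq, inv1_inv1])
        have hlenM : M.length ≤ N := by
          have := hlen
          simp only [List.length_cons, List.length_append, List.length_cons,
            List.length_nil] at this
          omega
        obtain ⟨U', C, hMeq, hCC, hCne⟩ := ih M hlenM hM
        refine ⟨p :: U', C, ?_, hCC, fun _ => hCne hMne⟩
        rw [invRev_cons, hpq, inv1_inv1]
        rw [hMeq]
        simp
      · -- cyclically reduced already
        refine ⟨[], p :: (M ++ [q]), by simp [invRev_eq], ?_, fun _ => by simp⟩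
        rw [IsRed, List.Chain', List.isChain_append]
        refine ⟨h, h, ?_⟩
        intro x hx y hy
        have hx' : x = q := by
          rw [show p :: (M ++ [q]) = (p :: M) ++ [q] by simp,
            List.getLast?_concat] at hx
          exact (Option.some_inj.mp hx).symm
        have hy' : y = p := by
          simp only [List.head?_cons, Option.mem_def, Option.some_inj] at hy
          exact hy.symm
        rw [hx', hy']
        exact hpq

/-- The reduced word of the `n`-th power, given the cyclic decomposition. -/
lemma isRed_pow_word {U C : List (α × Bool)} (h : IsRed (U ++ C ++ FreeGroup.invRev U))
    (hCC : IsRed (C ++ C)) (hC : C ≠ []) {n : ℕ} (hn : n ≠ 0) :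
    IsRed (U ++ pw n C ++ FreeGroup.invRev U) := by
  rw [List.append_assoc] at h ⊢
  rw [IsRed, List.Chain', List.isChain_append] at h ⊢
  obtain ⟨hU, hmid, J1⟩ := h
  rw [List.isChain_append] at hmid
  obtain ⟨hCr, hIU, J2⟩ := hmid
  refine ⟨hU, ?_, ?_⟩
  · rw [List.isChain_append]
    refine ⟨isRed_pw hCC hC n, hIU, ?_⟩
    intro x hx y hy
    rw [getLast?_pw hn C hC] at hx
    exact J2 x hx y hy
  · intro x hx y hy
    rw [List.head?_append_of_ne_nil _ (pw_ne_nil hn hC)] at hy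
    rw [head?_pw hn C hC] at hy
    apply J1 x hx y
    rw [List.head?_append_of_ne_nil _ hC]
    exact hy

lemma pow_word_eq {U C : List (α × Bool)} (n : ℕ) :
    (FreeGroup.mk (U ++ C ++ FreeGroup.invRev U)) ^ n
      = FreeGroup.mk (U ++ pw n C ++ FreeGroup.invRev U) := by
  rw [← FreeGroup.mul_mk, ← FreeGroup.mul_mk, ← FreeGroup.mul_mk, ← FreeGroup.mul_mk,
    ← FreeGroup.inv_mk, conj_pow, mk_pw]

/-- Uniqueness of the cyclic decomposition of a given (reduced) word. -/
lemma key {n : ℕ} (hn : n ≠ 0) :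
    ∀ (U C V D : List (α × Bool)), C ≠ [] → D ≠ [] →
      IsRed (C ++ C) → IsRed (D ++ D) → U.length ≤ V.length →
      U ++ pw n C ++ FreeGroup.invRev U = V ++ pw n D ++ FreeGroup.invRev V →
      U = V ∧ C = D := by
  intro U C V D hC hD hCC hDD hUV E
  have h1 : U <+: U ++ pw n C ++ FreeGroup.invRev U := by
    rw [List.append_assoc]; exact ⟨_, rfl⟩
  have h2 : V <+: U ++ pw n C ++ FreeGroup.invRev U := by
    rw [E, List.append_assoc]; exact ⟨_, rfl⟩
  obtain ⟨P, rfl⟩ := List.prefix_of_prefix_length_le h1 h2 hUV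
  rw [invRev_append] at E
  have E2 : pw n C ++ FreeGroup.invRev U
      = (P ++ pw n D ++ FreeGroup.invRev P) ++ FreeGroup.invRev U := by
    apply List.append_cancel_left (as := U)
    rw [← List.append_assoc, E]
    simp [List.append_assoc]
  have E3 : pw n C = P ++ pw n D ++ FreeGroup.invRev P :=
    List.append_cancel_right E2
  have hP : P = [] := by
    by_contra hPne
    have hhead : (pw n C).head? = P.head? := by
      rw [E3, List.append_assoc, List.head?_append_of_ne_nil _ hPne]
    have hlast : (pw n C).getLast? = P.head?.map FreeGroupRootAux.inv1 := by
      rw [E3, List.getLast?_append_of_ne_nil _ (invRev_ne_nil hPne), getLast?_invRev]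
    rw [head?_pw hn C hC] at hhead
    rw [getLast?_pw hn C hC] at hlast
    obtain ⟨ph, hph⟩ : ∃ ph, P.head? = some ph := ⟨P.head hPne, List.head?_eq_head hPne⟩
    rw [hph] at hhead hlast
    have hj := junction_of_cyc hCC (inv1 ph) (by rw [hlast]; rfl) ph (by rw [hhead]; rfl)
    simp at hj
  subst hP
  simp only [List.append_nil, invRev_eq, List.map_nil, List.reverse_nil,
    List.nil_append] at E3
  refine ⟨by simp, ?_⟩
  have hlen : C.length = D.length := by
    have := congrArg List.length E3
    rw [pw_length, pw_length] at this
    exact Nat.eq_of_mul_eq_mul_left (Nat.pos_of_ne_zero hn) this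
  cases n with
  | zero => exact absurd rfl hn
  | succ m =>
    have h1 : C = (pw (m + 1) C).take C.length := by
      rw [pw, List.take_left]
    have h2 : D = (pw (m + 1) D).take D.length := by
      rw [pw, List.take_left]
    rw [h1, h2, E3, hlen]

lemma pow_eq_one_imp [DecidableEq α] {b : FreeGroup α} {n : ℕ} (hn : n ≠ 0)
    (h : b ^ n = 1) : b = 1 := by
  by_contra hb
  obtain ⟨V, D, hB, hDD, hDne⟩ := decomp b.toWord.length b.toWord le_rfl (isRed_toWord b)
  have hD : D ≠ [] := hDne (by rwa [ne_eq, FreeGroup.toWord_eq_nil_iff])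
  have hbn : b ^ n = FreeGroup.mk (V ++ pw n D ++ FreeGroup.invRev V) := by
    conv_lhs => rw [← FreeGroup.mk_toWord (x := b), hB]
    exact pow_word_eq n
  have hred : IsRed (V ++ pw n D ++ FreeGroup.invRev V) := by
    refine isRed_pow_word ?_ hDD hD hn
    rw [← hB]; exact isRed_toWord b
  have htw : (b ^ n).toWord = V ++ pw n D ++ FreeGroup.invRev V := by
    rw [hbn, toWord_mk_eq hred]
  rw [h, FreeGroup.toWord_one] at htw
  have hlen := congrArg List.length htw
  simp only [List.length_nil, List.length_append, pw_length,
    FreeGroup.invRev_length] at hlen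
  have hD0 : D.length ≠ 0 := fun h0 => hD (List.length_eq_zero_iff.mp h0)
  have hn0 : 0 < n := Nat.pos_of_ne_zero hn
  nlinarith [Nat.mul_le_mul hn0 (Nat.pos_of_ne_zero hD0)]

end FreeGroupRootAux

theorem freeGroup_pow_injective {α : Type*} (a b : FreeGroup α) (n : ℕ)
    (hn : 1 ≤ n) (h : a ^ n = b ^ n) : a = b := by
  classical
  open FreeGroupRootAux in
  have hn0 : n ≠ 0 := by omega
  by_cases ha1 : a = 1
  · subst ha1
    rw [one_pow] at h
    exact (FreeGroupRootAux.pow_eq_one_imp hn0 h.symm).symm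
  by_cases hb1 : b = 1
  · subst hb1
    rw [one_pow] at h
    exact FreeGroupRootAux.pow_eq_one_imp hn0 h
  obtain ⟨U, C, hA, hCC, hCne⟩ :=
    FreeGroupRootAux.decomp a.toWord.length a.toWord le_rfl (FreeGroupRootAux.isRed_toWord a)
  obtain ⟨V, D, hB, hDD, hDne⟩ :=
    FreeGroupRootAux.decomp b.toWord.length b.toWord le_rfl (FreeGroupRootAux.isRed_toWord b)
  have hC : C ≠ [] := hCne (by rwa [ne_eq, FreeGroup.toWord_eq_nil_iff])
  have hD : D ≠ [] := hDne (by rwa [ne_eq, FreeGroup.toWord_eq_nil_iff])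
  have Ea : (a ^ n).toWord = U ++ FreeGroupRootAux.pw n C ++ FreeGroup.invRev U := by
    have han : a ^ n = FreeGroup.mk (U ++ FreeGroupRootAux.pw n C ++ FreeGroup.invRev U) := by
      conv_lhs => rw [← FreeGroup.mk_toWord (x := a), hA]
      exact FreeGroupRootAux.pow_word_eq n
    rw [han]
    refine FreeGroupRootAux.toWord_mk_eq (FreeGroupRootAux.isRed_pow_word ?_ hCC hC hn0)
    rw [← hA]; exact FreeGroupRootAux.isRed_toWord a
  have Eb : (b ^ n).toWord = V ++ FreeGroupRootAux.pw n D ++ FreeGroup.invRev V := by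
    have hbn : b ^ n = FreeGroup.mk (V ++ FreeGroupRootAux.pw n D ++ FreeGroup.invRev V) := by
      conv_lhs => rw [← FreeGroup.mk_toWord (x := b), hB]
      exact FreeGroupRootAux.pow_word_eq n
    rw [hbn]
    refine FreeGroupRootAux.toWord_mk_eq (FreeGroupRootAux.isRed_pow_word ?_ hDD hD hn0)
    rw [← hB]; exact FreeGroupRootAux.isRed_toWord b
  have E : U ++ FreeGroupRootAux.pw n C ++ FreeGroup.invRev U
      = V ++ FreeGroupRootAux.pw n D ++ FreeGroup.invRev V := by
    rw [← Ea, ← Eb, h]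
  rcases le_total U.length V.length with hle | hle
  · obtain ⟨hUV, hCD⟩ := FreeGroupRootAux.key hn0 U C V D hC hD hCC hDD hle E
    rw [← FreeGroup.mk_toWord (x := a), ← FreeGroup.mk_toWord (x := b), hA, hB, hUV, hCD]
  · obtain ⟨hVU, hDC⟩ := FreeGroupRootAux.key hn0 V D U C hD hC hDD hCC hle E.symm
    rw [← FreeGroup.mk_toWord (x := a), ← FreeGroup.mk_toWord (x := b), hA, hB, hVU, hDC]
end

section
/- In a free group, if a and b are not proper powers (each equals vᵏ only for k = 1) and aⁿ = bᵐ for some positive integers n, m, then a = b and n = m. -/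
open FreeGroup

namespace FGRootAux

variable {β : Type*}

section Exp
variable [DecidableEq β]

/-- Exponent-sum homomorphism counting occurrences of a fixed generator. -/
def expHom (x : β) : FreeGroup β →* Multiplicative ℤ :=
  FreeGroup.lift (fun a => Multiplicative.ofAdd (if a = x then (1 : ℤ) else 0))

lemma expHom_of_self (x : β) : expHom x (of x) = Multiplicative.ofAdd 1 := by
  simp [expHom]

lemma expHom_of_ne {x y : β} (h : y ≠ x) : expHom x (of y) = 1 := by
  simp [expHom, h]

lemma toAdd_expHom_zpow (x : β) (v : FreeGroup β) (s : ℤ) :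
    Multiplicative.toAdd (expHom x (v ^ s)) = s * Multiplicative.toAdd (expHom x v) := by
  rw [map_zpow, toAdd_zpow, smul_eq_mul]

end Exp

lemma of_eq_zpow {x : β} {v : FreeGroup β} {s : ℤ} (h : of x = v ^ s) :
    s = 1 ∨ s = -1 := by
  classical
  have h1 : Multiplicative.toAdd (expHom x (of x)) = 1 := by
    rw [expHom_of_self]; rfl
  rw [h, toAdd_expHom_zpow] at h1
  exact Int.isUnit_iff.mp (IsUnit.of_mul_eq_one _ h1)

lemma zpow_of_eq_zpow_of {x y : β} (hxy : x ≠ y) {p q : ℤ}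
    (h : (of x : FreeGroup β) ^ p = of y ^ q) : p = 0 := by
  classical
  have := congrArg (fun z => Multiplicative.toAdd (expHom x z)) h
  simp only [toAdd_expHom_zpow] at this
  rw [expHom_of_self, expHom_of_ne (Ne.symm hxy)] at this
  simpa using this

lemma eq_one_of_isEmpty [IsEmpty β] (z : FreeGroup β) : z = 1 := by
  rw [← FreeGroup.toWord_eq_nil_iff]
  cases h : z.toWord with
  | nil => rfl
  | cons hd tl => exact (IsEmpty.false hd.1).elim

lemma exists_zpow_of [Subsingleton β] (pt : β) (z : FreeGroup β) :
    ∃ s : ℤ, z = (of pt) ^ s := by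
  have hz : z ∈ Subgroup.zpowers (of pt : FreeGroup β) := by
    have h1 : Subgroup.closure (Set.range (FreeGroup.of : β → FreeGroup β))
        ≤ Subgroup.zpowers (of pt) := by
      rw [Subgroup.closure_le]
      rintro _ ⟨a, rfl⟩
      simpa [Subsingleton.elim a pt] using Subgroup.mem_zpowers (of pt : FreeGroup β)
    exact h1 (by simp [FreeGroup.closure_range_of])
  obtain ⟨s, hs⟩ := Subgroup.mem_zpowers_iff.mp hz
  exact ⟨s, hs.symm⟩

lemma subsingleton_zpowers [Subsingleton β] :
    ∃ c : FreeGroup β, ∀ z : FreeGroup β, ∃ s : ℤ, z = c ^ s := by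
  rcases isEmpty_or_nonempty β with he | hne
  · exact ⟨1, fun z => ⟨0, by simp [eq_one_of_isEmpty z]⟩⟩
  · obtain ⟨pt⟩ := hne
    exact ⟨of pt, exists_zpow_of pt⟩

lemma subsingleton_comm [Subsingleton β] (u v : FreeGroup β) : u * v = v * u := by
  obtain ⟨c, hc⟩ := subsingleton_zpowers (β := β)
  obtain ⟨s, rfl⟩ := hc u
  obtain ⟨t, rfl⟩ := hc v
  exact zpow_mul_comm c s t

lemma subsingleton_torsionfree [Subsingleton β] {z : FreeGroup β} {k : ℕ}
    (hk : k ≠ 0) (h : z ^ k = 1) : z = 1 := by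
  classical
  rcases isEmpty_or_nonempty β with he | hne
  · exact eq_one_of_isEmpty z
  · obtain ⟨pt⟩ := hne
    obtain ⟨s, rfl⟩ := exists_zpow_of pt z
    have : ((of pt : FreeGroup β) ^ s) ^ (k : ℤ) = 1 := by
      rw [zpow_natCast, h]
    rw [← zpow_mul] at this
    have h2 := congrArg (fun w => Multiplicative.toAdd (expHom pt w)) this
    simp only [toAdd_expHom_zpow] at h2
    rw [expHom_of_self] at h2
    have hs : s = 0 := by
      have : s * (k : ℤ) = 0 := by simpa using h2
      rcases mul_eq_zero.mp this with h' | h'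
      · exact h'
      · exact absurd h' (by exact_mod_cast hk)
    rw [hs, zpow_zero]

end FGRootAux

namespace FGRootAux

variable {α : Type*}

lemma closure_pair_comm {G : Type*} [Group G] {x y : G} (hxy : x * y = y * x) :
    ∀ u ∈ Subgroup.closure {x, y}, ∀ v ∈ Subgroup.closure {x, y}, u * v = v * u := by
  have key : ∀ w : G, x * w = w * x → y * w = w * y →
      ∀ z ∈ Subgroup.closure ({x, y} : Set G), z * w = w * z := by
    intro w h1 h2 z hz
    have hle : Subgroup.closure ({x, y} : Set G) ≤ Subgroup.centralizer {w} := by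
      rw [Subgroup.closure_le]
      intro p hp
      rw [SetLike.mem_coe, Subgroup.mem_centralizer_iff]
      intro q hq
      rw [Set.mem_singleton_iff] at hq
      subst hq
      rcases Set.mem_insert_iff.mp hp with hp | hp
      · subst hp; exact h1.symm
      · rw [Set.mem_singleton_iff] at hp; subst hp; exact h2.symm
    exact (Subgroup.mem_centralizer_iff.mp (hle hz) w rfl).symm
  intro u hu v hv
  have hxu : x * u = u * x := (key x rfl hxy.symm u hu).symm
  have hyu : y * u = u * y := (key y hxy rfl u hu).symm
  exact (key u hxu hyu v hv).symm

lemma swap_noncomm :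
    ¬ (Equiv.swap (0 : Fin 3) 1 * Equiv.swap 1 2 = Equiv.swap 1 2 * Equiv.swap (0 : Fin 3) 1) := by
  decide

lemma generators_subsingleton (H : Subgroup (FreeGroup α))
    (hcomm : ∀ u v : H, u * v = v * u) : Subsingleton (IsFreeGroup.Generators H) := by
  classical
  set ι := IsFreeGroup.Generators H
  let e := IsFreeGroup.toFreeGroup H
  have hc : ∀ u v : FreeGroup ι, u * v = v * u := by
    intro u v
    have h1 := congrArg e (hcomm (e.symm u) (e.symm v))
    simpa using h1
  by_contra hns
  rw [not_subsingleton_iff_nontrivial] at hns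
  obtain ⟨i, j, hij⟩ := hns.exists_pair_ne
  let f : ι → Equiv.Perm (Fin 3) := fun z =>
    if z = i then Equiv.swap 0 1 else if z = j then Equiv.swap 1 2 else 1
  have h2 := congrArg (FreeGroup.lift f) (hc (of i) (of j))
  simp only [_root_.map_mul, FreeGroup.lift_apply_of] at h2
  simp only [f, if_pos rfl, if_neg (Ne.symm hij)] at h2
  exact swap_noncomm h2

lemma subgroup_cyclic (H : Subgroup (FreeGroup α)) (hcomm : ∀ u v : H, u * v = v * u) :
    ∃ c : FreeGroup α, ∀ z ∈ H, ∃ s : ℤ, z = c ^ s := by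
  haveI := generators_subsingleton H hcomm
  set e := IsFreeGroup.toFreeGroup H with he
  obtain ⟨c₀, hc₀⟩ := subsingleton_zpowers (β := IsFreeGroup.Generators H)
  refine ⟨((e.symm c₀ : H) : FreeGroup α), fun z hz => ?_⟩
  obtain ⟨s, hs⟩ := hc₀ (e ⟨z, hz⟩)
  refine ⟨s, ?_⟩
  have h3 : (⟨z, hz⟩ : H) = e.symm c₀ ^ s := by
    apply e.injective
    rw [_root_.map_zpow, hs]
    simp
  have h4 := congrArg (Subtype.val : H → FreeGroup α) h3
  simpa using h4

lemma freeGroup_torsionfree {x : FreeGroup α} {k : ℕ} (hk : k ≠ 0) (h : x ^ k = 1) :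
    x = 1 := by
  set H := Subgroup.zpowers x with hH
  have hcomm : ∀ u v : H, u * v = v * u := by
    rintro ⟨u, hu⟩ ⟨v, hv⟩
    obtain ⟨s, hs⟩ := Subgroup.mem_zpowers_iff.mp hu
    obtain ⟨t, ht⟩ := Subgroup.mem_zpowers_iff.mp hv
    apply Subtype.ext
    show u * v = v * u
    rw [← hs, ← ht]
    exact zpow_mul_comm x s t
  haveI := generators_subsingleton H hcomm
  set e := IsFreeGroup.toFreeGroup H
  have hx : x ∈ H := Subgroup.mem_zpowers x
  have h1 : (⟨x, hx⟩ : H) ^ k = 1 := by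
    apply Subtype.ext
    show x ^ k = 1
    exact h
  have h2 : (e ⟨x, hx⟩) ^ k = 1 := by rw [← _root_.map_pow, h1, _root_.map_one]
  have h3 := subsingleton_torsionfree hk h2
  have h4 : (⟨x, hx⟩ : H) = 1 := e.injective (by simpa using h3)
  exact congrArg Subtype.val h4

lemma commute_cyclic {x y : FreeGroup α} (hxy : x * y = y * x) :
    ∃ (c : FreeGroup α) (s t : ℤ), x = c ^ s ∧ y = c ^ t := by
  set H := Subgroup.closure ({x, y} : Set (FreeGroup α)) with hH
  have hcomm : ∀ u v : H, u * v = v * u := by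
    rintro ⟨u, hu⟩ ⟨v, hv⟩
    exact Subtype.ext (closure_pair_comm hxy u hu v hv)
  obtain ⟨c, hc⟩ := subgroup_cyclic H hcomm
  obtain ⟨s, hs⟩ := hc x (Subgroup.subset_closure (by simp))
  obtain ⟨t, ht⟩ := hc y (Subgroup.subset_closure (by simp))
  exact ⟨c, s, t, hs, ht⟩

end FGRootAux

namespace FGRootAux

variable {α : Type*}

lemma centralizer_comm {g : FreeGroup α} (hg : g ≠ 1) (u v : FreeGroup α)
    (hu : g * u = u * g) (hv : g * v = v * g) : u * v = v * u := by
  classical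
  set H := Subgroup.centralizer ({g} : Set (FreeGroup α)) with hHdef
  have hmem : ∀ z : FreeGroup α, g * z = z * g → z ∈ H := by
    intro z hz
    rw [hHdef, Subgroup.mem_centralizer_iff]
    intro q hq
    rw [Set.mem_singleton_iff] at hq
    subst hq
    exact hz
  have hgH : g ∈ H := hmem g rfl
  set e := IsFreeGroup.toFreeGroup H with he
  set γ := e ⟨g, hgH⟩ with hγdef
  have hγ1 : γ ≠ 1 := by
    intro h0
    have h1 : (⟨g, hgH⟩ : H) = 1 := e.injective (by rw [_root_.map_one]; exact h0)
    exact hg (congrArg Subtype.val h1)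
  have hγc : ∀ w : FreeGroup (IsFreeGroup.Generators H), γ * w = w * γ := by
    intro w
    have hw := (e.symm w).2
    have h4 := Subgroup.mem_centralizer_iff.mp hw g rfl
    have h5 : (⟨g, hgH⟩ : H) * e.symm w = e.symm w * ⟨g, hgH⟩ := Subtype.ext h4
    have h6 := congrArg e h5
    simpa using h6
  haveI : Subsingleton (IsFreeGroup.Generators H) := by
    by_contra hns
    rw [not_subsingleton_iff_nontrivial] at hns
    obtain ⟨i, j, hij⟩ := hns.exists_pair_ne
    have hp : ∀ l : IsFreeGroup.Generators H, ∃ p : ℤ, γ = (of l) ^ p := by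
      intro l
      obtain ⟨c, s, t, h1, h2⟩ := commute_cyclic (hγc (of l))
      rcases of_eq_zpow h2 with ht | ht
      · rw [ht, zpow_one] at h2
        exact ⟨s, by rw [h1, ← h2]⟩
      · rw [ht, zpow_neg, zpow_one] at h2
        refine ⟨-s, ?_⟩
        have h2' : c = (of l)⁻¹ := by rw [h2, inv_inv]
        rw [h1, h2']
        group
    obtain ⟨p, hpγ⟩ := hp i
    obtain ⟨q, hqγ⟩ := hp j
    have hp0 : p = 0 := zpow_of_eq_zpow_of hij (hpγ.symm.trans hqγ)
    exact hγ1 (by rw [hpγ, hp0, zpow_zero])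
  have h7 := subsingleton_comm (e ⟨u, hmem u hu⟩) (e ⟨v, hmem v hv⟩)
  rw [← _root_.map_mul, ← _root_.map_mul] at h7
  have h8 := congrArg Subtype.val (e.injective h7)
  simpa using h8

end FGRootAux

theorem freeGroup_minimal_root_unique {α : Type*} (a b : FreeGroup α)
    (ha : a ≠ 1) (hb : b ≠ 1)
    (hra : ∀ (v : FreeGroup α) (k : ℕ), 1 ≤ k → a = v ^ k → k = 1)
    (hrb : ∀ (v : FreeGroup α) (k : ℕ), 1 ≤ k → b = v ^ k → k = 1)
    (n m : ℕ) (hn : 1 ≤ n) (hm : 1 ≤ m) (h : a ^ n = b ^ m) :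
    a = b ∧ n = m := by
  classical
  have hn0 : n ≠ 0 := by omega
  have hm0 : m ≠ 0 := by omega
  have hg1 : a ^ n ≠ 1 := fun h0 => ha (FGRootAux.freeGroup_torsionfree hn0 h0)
  have hga : a ^ n * a = a * a ^ n := (((Commute.refl a).pow_right n).eq).symm
  have hgb : a ^ n * b = b * a ^ n := by
    rw [h]
    exact (((Commute.refl b).pow_right m).eq).symm
  have hab : a * b = b * a := FGRootAux.centralizer_comm hg1 a b hga hgb
  obtain ⟨c, s, t, hac, hbc⟩ := FGRootAux.commute_cyclic hab
  have key : ∀ (x : FreeGroup α), x ≠ 1 → (∀ v k, 1 ≤ k → x = v ^ k → k = 1) →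
      ∀ s : ℤ, x = c ^ s → x = c ∨ x = c⁻¹ := by
    intro x hx1 hr s hxs
    rcases lt_trichotomy s 0 with hs | hs | hs
    · have hx2 : x = (c⁻¹) ^ ((-s).toNat) := by
        rw [← zpow_natCast, Int.toNat_of_nonneg (by omega), zpow_neg, inv_zpow, inv_inv]
        exact hxs
      have hk := hr c⁻¹ (-s).toNat (by omega) hx2
      right
      rw [hx2, hk, pow_one]
    · exact absurd (by rw [hxs, hs, zpow_zero]) hx1
    · have hx2 : x = c ^ (s.toNat) := by
        rw [← zpow_natCast, Int.toNat_of_nonneg (by omega), hxs]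
      have hk := hr c s.toNat (by omega) hx2
      left
      rw [hx2, hk, pow_one]
  have hac' := key a ha hra s hac
  have hbc' := key b hb hrb t hbc
  have hab' : a = b ∨ a = b⁻¹ := by
    rcases hac' with h1 | h1 <;> rcases hbc' with h2 | h2
    · exact Or.inl (h1.trans h2.symm)
    · exact Or.inr (by rw [h1, h2, inv_inv])
    · exact Or.inr (by rw [h1, h2])
    · exact Or.inl (h1.trans h2.symm)
  have haeb : a = b := by
    rcases hab' with h1 | h1
    · exact h1
    · exfalso
      have h2 : b ^ (m + n) = 1 := by
        rw [pow_add, ← h, h1, inv_pow, inv_mul_cancel]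
      exact hb (FGRootAux.freeGroup_torsionfree (by omega) h2)
  subst haeb
  refine ⟨rfl, ?_⟩
  by_contra hnm
  rcases Nat.lt_or_ge n m with hlt | hge
  · have e1 : a ^ n * a ^ (m - n) = a ^ n * 1 := by
      rw [mul_one, ← pow_add, h]
      congr 1
      omega
    exact ha (FGRootAux.freeGroup_torsionfree (by omega) (mul_left_cancel e1))
  · have hlt : m < n := by omega
    have e1 : a ^ m * a ^ (n - m) = a ^ m * 1 := by
      rw [mul_one, ← pow_add, ← h]
      congr 1
      omega
    exact ha (FGRootAux.freeGroup_torsionfree (by omega) (mul_left_cancel e1))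
end
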